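/- In the stochastic growth example, the OLS-limit slope satisfies β̂(A) = β* + γ*·Cov(Z, ln A_Z)/(Var(ln A_Z) + Var(ln Y)); in particular, if γ* > 0 and A_H < A_L (so Cov(Z, ln A_Z) < 0), then β̂(A) < β*. -/

import Mathlib

open MeasureTheory

/-- Covariance of two real random variables under a (probability) measure. -/
noncomputable def cov {Ω : Type} [MeasurableSpace Ω] (μ : Measure Ω)
    (f g : Ω → ℝ) : ℝ :=
  (∫ ω, f ω * g ω ∂μ) - (∫ ω, f ω ∂μ) * (∫ ω, g ω ∂μ)

/-- In the stochastic growth example with true law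
`ln Y' = α* + β* ln X + γ* Z + ξ`, where `ln X = ln A_Z + ln Y`, `ξ` has zero
covariance with `ln X`, and `Z` (hence `ln A_Z`) is independent of `Y` (zero
covariances), the OLS-limit slope satisfies
`β̂ = Cov(ln Y', ln X)/Var(ln X) = β* + γ*·Cov(Z, ln A_Z)/(Var(ln A_Z) + Var(ln Y))`;
in particular, if `γ* > 0` and `Cov(Z, ln A_Z) < 0` (as when `A_H < A_L`), then
`β̂ < β*`. -/
theorem aux_int_mul {Ω : Type} [MeasurableSpace Ω] {μ : Measure Ω}
    {f g : Ω → ℝ} (hf : MeasureTheory.MemLp f 2 μ) (hg : MeasureTheory.MemLp g 2 μ) :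
    Integrable (fun ω => f ω * g ω) μ := by
  have h := (((hf.add hg).integrable_sq.sub hf.integrable_sq).sub hg.integrable_sq).div_const 2
  have heq : (fun ω => f ω * g ω)
      = fun ω => (((f ω + g ω) ^ 2 - f ω ^ 2) - g ω ^ 2) / 2 := by
    funext ω; ring
  rw [heq]; exact h

theorem aux_cov_comm {Ω : Type} [MeasurableSpace Ω] (μ : Measure Ω)
    (f g : Ω → ℝ) : cov μ f g = cov μ g f := by
  simp only [cov, mul_comm]

theorem aux_cov_add_right {Ω : Type} [MeasurableSpace Ω] {μ : Measure Ω}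
    [IsProbabilityMeasure μ] {f g h : Ω → ℝ}
    (hf : MeasureTheory.MemLp f 2 μ) (hg : MeasureTheory.MemLp g 2 μ)
    (hh : MeasureTheory.MemLp h 2 μ) :
    cov μ f (fun ω => g ω + h ω) = cov μ f g + cov μ f h := by
  simp only [cov, mul_add]
  rw [integral_add (aux_int_mul hf hg) (aux_int_mul hf hh),
      integral_add (hg.integrable one_le_two) (hh.integrable one_le_two)]
  ring

theorem aux_cov_comb {Ω : Type} [MeasurableSpace Ω] {μ : Measure Ω}
    [IsProbabilityMeasure μ] {f g h X : Ω → ℝ}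
    (hf : MeasureTheory.MemLp f 2 μ) (hg : MeasureTheory.MemLp g 2 μ)
    (hh : MeasureTheory.MemLp h 2 μ) (hX : MeasureTheory.MemLp X 2 μ)
    (c b d : ℝ) :
    cov μ (fun ω => c + b * f ω + d * g ω + h ω) X
      = b * cov μ f X + d * cov μ g X + cov μ h X := by
  have ifi := hf.integrable one_le_two
  have igi := hg.integrable one_le_two
  have ihi := hh.integrable one_le_two
  have iXi := hX.integrable one_le_two
  have hfX := aux_int_mul hf hX
  have hgX := aux_int_mul hg hX
  have hhX := aux_int_mul hh hX
  have e1 : ∫ ω, (c + b * f ω + d * g ω + h ω) * X ω ∂μ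
      = c * (∫ ω, X ω ∂μ) + b * (∫ ω, f ω * X ω ∂μ) + d * (∫ ω, g ω * X ω ∂μ)
        + ∫ ω, h ω * X ω ∂μ := by
    have heq : (fun ω => (c + b * f ω + d * g ω + h ω) * X ω)
        = fun ω => c * X ω + b * (f ω * X ω) + d * (g ω * X ω) + h ω * X ω := by
      funext ω; ring
    have i2 : Integrable (fun ω => c * X ω + b * (f ω * X ω)) μ :=
      (iXi.const_mul c).add (hfX.const_mul b)
    have i3 : Integrable (fun ω => c * X ω + b * (f ω * X ω) + d * (g ω * X ω)) μ :=
      i2.add (hgX.const_mul d)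
    rw [heq, integral_add i3 hhX, integral_add i2 (hgX.const_mul d),
        integral_add (iXi.const_mul c) (hfX.const_mul b),
        integral_const_mul, integral_const_mul, integral_const_mul]
  have e2 : ∫ ω, (c + b * f ω + d * g ω + h ω) ∂μ
      = c + b * (∫ ω, f ω ∂μ) + d * (∫ ω, g ω ∂μ) + ∫ ω, h ω ∂μ := by
    have j1 : Integrable (fun _ : Ω => c) μ := integrable_const c
    have j2 : Integrable (fun ω => c + b * f ω) μ := j1.add (ifi.const_mul b)
    have j3 : Integrable (fun ω => c + b * f ω + d * g ω) μ := j2.add (igi.const_mul d)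
    rw [integral_add j3 ihi, integral_add j2 (igi.const_mul d),
        integral_add j1 (ifi.const_mul b),
        integral_const_mul, integral_const_mul, integral_const, probReal_univ]
    simp
  simp only [cov]
  rw [e1, e2]
  ring

theorem growth_ols_limit_slope
    {Ω : Type} [MeasurableSpace Ω] (μ : Measure Ω) [IsProbabilityMeasure μ]
    (lY lA Z ξ : Ω → ℝ)  -- ln Y, ln A_Z, the shock Z, and ξ
    (hlY : MeasureTheory.MemLp lY 2 μ) (hlA : MeasureTheory.MemLp lA 2 μ)
    (hZ : MeasureTheory.MemLp Z 2 μ) (hξ : MeasureTheory.MemLp ξ 2 μ)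
    (αs βs γs : ℝ)
    (lY' : Ω → ℝ)
    (hlaw : ∀ ω, lY' ω = αs + βs * (lA ω + lY ω) + γs * Z ω + ξ ω)
    -- ξ independent of (Y, Z): zero covariance with ln X and with Z
    (hξX : cov μ ξ (fun ω => lA ω + lY ω) = 0)
    -- Z (and hence ln A_Z) independent of Y
    (hZY : cov μ Z lY = 0) (hAY : cov μ lA lY = 0)
    -- nondegeneracy of ln X
    (hvar : 0 < cov μ lA lA + cov μ lY lY) :
    cov μ lY' (fun ω => lA ω + lY ω) / cov μ (fun ω => lA ω + lY ω) (fun ω => lA ω + lY ω)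
        = βs + γs * cov μ Z lA / (cov μ lA lA + cov μ lY lY) ∧
    (0 < γs → cov μ Z lA < 0 →
      cov μ lY' (fun ω => lA ω + lY ω) /
          cov μ (fun ω => lA ω + lY ω) (fun ω => lA ω + lY ω) < βs) := by
  have hX : MeasureTheory.MemLp (fun ω => lA ω + lY ω) 2 μ := hlA.add hlY
  have hlY'eq : lY' = fun ω => αs + βs * (lA ω + lY ω) + γs * Z ω + ξ ω := funext hlaw
  have hYA : cov μ lY lA = 0 := (aux_cov_comm μ lA lY) ▸ hAY
  have hXX : cov μ (fun ω => lA ω + lY ω) (fun ω => lA ω + lY ω)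
      = cov μ lA lA + cov μ lY lY := by
    rw [aux_cov_add_right hX hlA hlY, aux_cov_comm μ _ lA, aux_cov_comm μ _ lY,
        aux_cov_add_right hlA hlA hlY, aux_cov_add_right hlY hlA hlY, hAY, hYA]
    ring
  have hZX : cov μ Z (fun ω => lA ω + lY ω) = cov μ Z lA := by
    rw [aux_cov_add_right hZ hlA hlY, hZY, add_zero]
  have hc : cov μ lY' (fun ω => lA ω + lY ω)
      = βs * (cov μ lA lA + cov μ lY lY) + γs * cov μ Z lA := by
    rw [hlY'eq, aux_cov_comb hX hZ hξ hX αs βs γs, hXX, hZX, hξX, add_zero]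
  constructor
  · rw [hc, hXX]
    field_simp
  · intro hγ hC
    rw [hc, hXX]
    have h1 : γs * cov μ Z lA < 0 := mul_neg_of_pos_of_neg hγ hC
    rw [div_lt_iff₀ hvar]
    nlinarith
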